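/- The function ψ(k) = 2(E(k) - (1-k)K(k)) / (E'(k) - k K'(k)) on (0,1) tends to +∞ as k → 1⁻. -/

import Mathlib

open Real intervalIntegral

/-- Complete elliptic integral of the first kind. -/
noncomputable def ellK (r : ℝ) : ℝ :=
  ∫ θ in (0:ℝ)..(π/2), 1 / Real.sqrt (1 - r ^ 2 * Real.sin θ ^ 2)

/-- Complete elliptic integral of the second kind. -/
noncomputable def ellE (r : ℝ) : ℝ :=
  ∫ θ in (0:ℝ)..(π/2), Real.sqrt (1 - r ^ 2 * Real.sin θ ^ 2)

/-- Complementary elliptic integral K'(k) = K(√(1-k²)). -/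
noncomputable def ellK' (k : ℝ) : ℝ := ellK (Real.sqrt (1 - k ^ 2))

/-- Complementary elliptic integral E'(k) = E(√(1-k²)). -/
noncomputable def ellE' (k : ℝ) : ℝ := ellE (Real.sqrt (1 - k ^ 2))

/-- The Duren–Pfaltzgraff function ψ. -/
noncomputable def psi (k : ℝ) : ℝ :=
  2 * (ellE k - (1 - k) * ellK k) / (ellE' k - k * ellK' k)

lemma A_pos {r : ℝ} (hr : r ^ 2 < 1) (θ : ℝ) : 0 < 1 - r ^ 2 * sin θ ^ 2 := by
  nlinarith [sin_sq_le_one θ, sq_nonneg r, sq_nonneg (sin θ)]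
lemma contE (r : ℝ) : Continuous (fun θ : ℝ => Real.sqrt (1 - r ^ 2 * sin θ ^ 2)) := by
  fun_prop
lemma contK {r : ℝ} (hr : r ^ 2 < 1) :
    Continuous (fun θ : ℝ => 1 / Real.sqrt (1 - r ^ 2 * sin θ ^ 2)) := by
  apply continuous_const.div (contE r)
  intro θ
  exact ne_of_gt (Real.sqrt_pos.2 (A_pos hr θ))
lemma intE (r : ℝ) : IntervalIntegrable (fun θ : ℝ => Real.sqrt (1 - r ^ 2 * sin θ ^ 2))
    MeasureTheory.volume 0 (π/2) := (contE r).intervalIntegrable _ _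
lemma intK {r : ℝ} (hr : r ^ 2 < 1) :
    IntervalIntegrable (fun θ : ℝ => 1 / Real.sqrt (1 - r ^ 2 * sin θ ^ 2))
    MeasureTheory.volume 0 (π/2) := (contK hr).intervalIntegrable _ _
lemma sqrt_ge_self {x : ℝ} (hx : x ≤ 1) : x ≤ Real.sqrt x := by
  rcases le_or_gt x 0 with h | h
  · exact h.trans (Real.sqrt_nonneg x)
  · calc x = Real.sqrt (x ^ 2) := (Real.sqrt_sq h.le).symm
    _ ≤ Real.sqrt x := Real.sqrt_le_sqrt (by nlinarith)
lemma ellE_lower (k : ℝ) : π/2 - k ^ 2 * (π/4) ≤ ellE k := by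
  have h1 : (∫ θ in (0:ℝ)..(π/2), (1 - k ^ 2 * sin θ ^ 2)) = π/2 - k ^ 2 * (π/4) := by
    rw [intervalIntegral.integral_sub intervalIntegrable_const
      ((by fun_prop : Continuous (fun θ : ℝ => k ^ 2 * sin θ ^ 2)).intervalIntegrable _ _),
      intervalIntegral.integral_const_mul, integral_sin_sq]
    norm_num
    exact Or.inl (by ring)
  rw [ellE, ← h1]
  apply intervalIntegral.integral_mono_on (by positivity)
    ((_root_.intervalIntegrable_const).sub
      ((by fun_prop : Continuous (fun θ : ℝ => k ^ 2 * sin θ ^ 2)).intervalIntegrable _ _)) (intE k)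
  intro θ _
  exact sqrt_ge_self (by nlinarith [sq_nonneg (k * sin θ)])
lemma ellK_upper {r : ℝ} (hr : r ^ 2 < 1) : ellK r ≤ (π/2) / Real.sqrt (1 - r ^ 2) := by
  have h1 : (∫ _θ in (0:ℝ)..(π/2), 1 / Real.sqrt (1 - r ^ 2)) = (π/2) / Real.sqrt (1 - r ^ 2) := by
    simp [div_eq_mul_inv]
  rw [ellK, ← h1]
  apply intervalIntegral.integral_mono_on (by positivity) (intK hr) _root_.intervalIntegrable_const
  intro θ _
  apply one_div_le_one_div_of_le (Real.sqrt_pos.2 (by nlinarith))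
  exact Real.sqrt_le_sqrt (by nlinarith [sq_nonneg r, sq_nonneg (sin θ), sin_sq_le_one θ])
lemma ellE_le_ellK {r : ℝ} (hr : r ^ 2 < 1) : ellE r ≤ ellK r := by
  rw [ellE, ellK]
  apply intervalIntegral.integral_mono_on (by positivity) (intE r) (intK hr)
  intro θ _
  have h := A_pos hr θ
  have h1 : 1 - r ^ 2 * sin θ ^ 2 ≤ 1 := by nlinarith [sq_nonneg r, sq_nonneg (sin θ)]
  rw [le_div_iff₀ (Real.sqrt_pos.2 h)]
  rw [Real.mul_self_sqrt h.le]
  exact h1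
noncomputable def gfun (r k θ : ℝ) : ℝ :=
  Real.sqrt (1 - r ^ 2 * sin θ ^ 2) - k * (1 / Real.sqrt (1 - r ^ 2 * sin θ ^ 2))
lemma key_ineq {k A B : ℝ} (hA0 : 0 < A) (hB0 : 0 < B) (hk : 0 ≤ k)
    (hABk : k ^ 2 < A * B) :
    0 < (Real.sqrt A - k * (1 / Real.sqrt A)) + (Real.sqrt B - k * (1 / Real.sqrt B)) := by
  have hsA : 0 < Real.sqrt A := Real.sqrt_pos.2 hA0
  have hsB : 0 < Real.sqrt B := Real.sqrt_pos.2 hB0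
  have ht2 : (Real.sqrt A * Real.sqrt B) ^ 2 = A * B := by
    rw [mul_pow, Real.sq_sqrt hA0.le, Real.sq_sqrt hB0.le]
  have hsAB : k < Real.sqrt A * Real.sqrt B := by
    nlinarith [mul_pos hsA hsB]
  have heq : (Real.sqrt A - k * (1 / Real.sqrt A)) + (Real.sqrt B - k * (1 / Real.sqrt B))
      = (Real.sqrt A * Real.sqrt B - k) * (Real.sqrt A + Real.sqrt B)
        / (Real.sqrt A * Real.sqrt B) := by
    field_simp
    ring
  rw [heq]
  exact div_pos (mul_pos (by linarith) (by positivity)) (by positivity)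
lemma gfun_cont {r : ℝ} (k : ℝ) (hr2lt : r ^ 2 < 1) : Continuous (gfun r k) :=
  (contE r).sub (continuous_const.mul (contK hr2lt))
lemma gfun_pos {k r θ : ℝ} (hk0 : 0 < k) (hk1 : k < 1) (hr2 : r ^ 2 = 1 - k ^ 2)
    (hθ0 : 0 < θ) (hθ1 : θ < π / 2) :
    0 < gfun r k θ + gfun r k (π / 2 - θ) := by
  have hs0 : 0 < sin θ := sin_pos_of_pos_of_lt_pi hθ0 (by linarith [pi_pos])
  have hc0 : 0 < cos θ := cos_pos_of_mem_Ioo ⟨by linarith [pi_pos], hθ1⟩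
  have hpyth := sin_sq_add_cos_sq θ
  have hs2 : sin θ ^ 2 < 1 := by nlinarith
  have hc2 : cos θ ^ 2 < 1 := by nlinarith
  have hk2 : (0:ℝ) < 1 - k ^ 2 := by nlinarith
  have hsin : sin (π / 2 - θ) = cos θ := sin_pi_div_two_sub θ
  unfold gfun
  rw [hsin]
  have hA0 : (0:ℝ) < 1 - r ^ 2 * sin θ ^ 2 := by nlinarith [mul_pos hk2 (sub_pos.2 hs2)]
  have hB0 : (0:ℝ) < 1 - r ^ 2 * cos θ ^ 2 := by nlinarith [mul_pos hk2 (sub_pos.2 hc2)]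
  apply key_ineq hA0 hB0 hk0.le
  have key : (1 - r ^ 2 * sin θ ^ 2) * (1 - r ^ 2 * cos θ ^ 2)
      = k ^ 2 + (1 - k ^ 2) ^ 2 * (sin θ * cos θ) ^ 2 := by
    rw [hr2]
    linear_combination (k ^ 2 - 1) * hpyth
  rw [key]
  have := mul_pos (pow_pos hk2 2) (pow_pos (mul_pos hs0 hc0) 2)
  linarith
lemma den_pos {k : ℝ} (hk0 : 0 < k) (hk1 : k < 1) :
    0 < ellE (Real.sqrt (1 - k ^ 2)) - k * ellK (Real.sqrt (1 - k ^ 2)) := by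
  set r : ℝ := Real.sqrt (1 - k ^ 2) with hr
  have hk2 : (0:ℝ) < 1 - k ^ 2 := by nlinarith
  have hr2 : r ^ 2 = 1 - k ^ 2 := Real.sq_sqrt hk2.le
  have hr2lt : r ^ 2 < 1 := by nlinarith
  have hcg : Continuous (gfun r k) := gfun_cont k hr2lt
  have hcg2 : Continuous (fun θ : ℝ => gfun r k (π / 2 - θ)) :=
    hcg.comp (continuous_const.sub continuous_id)
  have hval : ellE r - k * ellK r = ∫ θ in (0:ℝ)..(π/2), gfun r k θ := by
    rw [ellE, ellK, ← intervalIntegral.integral_const_mul,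
      ← intervalIntegral.integral_sub (intE r) ((intK hr2lt).const_mul k)]
    rfl
  have hrefl : (∫ θ in (0:ℝ)..(π/2), gfun r k (π/2 - θ)) = ∫ θ in (0:ℝ)..(π/2), gfun r k θ := by
    rw [intervalIntegral.integral_comp_sub_left (gfun r k) (π/2)]
    norm_num
  have hadd : (∫ θ in (0:ℝ)..(π/2), (gfun r k θ + gfun r k (π/2 - θ)))
      = 2 * ∫ θ in (0:ℝ)..(π/2), gfun r k θ := by
    rw [intervalIntegral.integral_add (hcg.intervalIntegrable _ _)
      (hcg2.intervalIntegrable _ _), hrefl]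
    ring
  have hpos : 0 < ∫ θ in (0:ℝ)..(π/2), (gfun r k θ + gfun r k (π/2 - θ)) := by
    apply intervalIntegral.intervalIntegral_pos_of_pos_on
      ((hcg.add hcg2).intervalIntegrable _ _)
    · exact fun θ hθ => gfun_pos hk0 hk1 hr2 hθ.1 hθ.2
    · positivity
  rw [hval]
  rw [hadd] at hpos
  linarith
lemma psi_lower {k : ℝ} (hk : k ∈ Set.Ioo (15/16 : ℝ) 1) : (4 * (1 - k))⁻¹ ≤ psi k := by
  obtain ⟨hkl, hk1⟩ := hk
  have hk0 : (0:ℝ) < k := by linarith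
  have hpi := pi_pos
  have hk2 : (0:ℝ) < 1 - k ^ 2 := by nlinarith
  have hk2lt : k ^ 2 < 1 := by nlinarith
  -- numerator lower bound
  have hnum : π / 8 ≤ ellE k - (1 - k) * ellK k := by
    have hE := ellE_lower k
    have hK := ellK_upper hk2lt
    have hkk : (0:ℝ) ≤ 1 - k := by linarith
    have h1 : (1 - k) * ellK k ≤ (1 - k) * ((π/2) / Real.sqrt (1 - k ^ 2)) :=
      mul_le_mul_of_nonneg_left hK hkk
    have hsq1 : Real.sqrt (1 - k) ≤ Real.sqrt (1 - k ^ 2) :=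
      Real.sqrt_le_sqrt (by nlinarith)
    have hsq0 : (0:ℝ) < Real.sqrt (1 - k) := Real.sqrt_pos.2 (by linarith)
    have h2 : (1 - k) / Real.sqrt (1 - k ^ 2) ≤ Real.sqrt (1 - k) := by
      calc (1 - k) / Real.sqrt (1 - k ^ 2) ≤ (1 - k) / Real.sqrt (1 - k) :=
            div_le_div_of_nonneg_left hkk hsq0 hsq1
        _ = Real.sqrt (1 - k) := Real.div_sqrt
    have h3 : Real.sqrt (1 - k) ≤ 1/4 := by
      rw [show (1/4 : ℝ) = Real.sqrt ((1/4)^2) from (Real.sqrt_sq (by norm_num)).symm]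
      exact Real.sqrt_le_sqrt (by nlinarith)
    have h4 : (1 - k) * ((π/2) / Real.sqrt (1 - k ^ 2)) = (π/2) * ((1 - k) / Real.sqrt (1 - k ^ 2)) := by
      ring
    have h5 : (1 - k) * ellK k ≤ (π/2) * (1/4) := by
      rw [h4] at h1
      calc (1 - k) * ellK k ≤ (π/2) * ((1 - k) / Real.sqrt (1 - k ^ 2)) := h1
        _ ≤ (π/2) * (1/4) := by
            apply mul_le_mul_of_nonneg_left (h2.trans h3) (by linarith)
    nlinarith
  -- denominator bounds
  have hden_pos : 0 < ellE' k - k * ellK' k := den_pos hk0 hk1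
  have hden_up : ellE' k - k * ellK' k ≤ (1 - k) * π := by
    set r : ℝ := Real.sqrt (1 - k ^ 2) with hrdef
    have hr2 : r ^ 2 = 1 - k ^ 2 := Real.sq_sqrt hk2.le
    have hr2lt : r ^ 2 < 1 := by nlinarith
    have hEK : ellE r ≤ ellK r := ellE_le_ellK hr2lt
    have hKup : ellK r ≤ (π/2) / Real.sqrt (1 - r ^ 2) := ellK_upper hr2lt
    have hsk : Real.sqrt (1 - r ^ 2) = k := by
      rw [hr2, show (1 - (1 - k^2)) = k^2 by ring, Real.sqrt_sq hk0.le]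
    rw [hsk] at hKup
    have hKpi : ellK r ≤ π := by
      calc ellK r ≤ (π/2)/k := hKup
        _ ≤ π := by rw [div_le_iff₀ hk0]; nlinarith
    have : ellE' k - k * ellK' k ≤ (1 - k) * ellK r := by
      show ellE r - k * ellK r ≤ (1 - k) * ellK r
      nlinarith
    calc ellE' k - k * ellK' k ≤ (1 - k) * ellK r := this
      _ ≤ (1 - k) * π := mul_le_mul_of_nonneg_left hKpi (by linarith)
  -- combine
  have heq : (4 * (1 - k))⁻¹ = (π/4) / ((1 - k) * π) := by
    have h1 : (1:ℝ) - k ≠ 0 := by linarith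
    have h2 : π ≠ 0 := ne_of_gt hpi
    field_simp
  rw [psi, heq]
  apply div_le_div₀ (by linarith) (by linarith) hden_pos hden_up

/-- ψ(k) → +∞ as k → 1⁻. -/
theorem psi_tendsto_atTop :
    Filter.Tendsto psi (nhdsWithin 1 (Set.Iio 1)) Filter.atTop := by
  have h1 : Filter.Tendsto (fun k : ℝ => (4 * (1 - k))⁻¹)
      (nhdsWithin 1 (Set.Iio 1)) Filter.atTop := by
    apply Filter.Tendsto.inv_tendsto_nhdsGT_zero
    rw [tendsto_nhdsWithin_iff]
    constructor
    · have hc : Filter.Tendsto (fun k : ℝ => 4 * (1 - k)) (nhds 1) (nhds 0) := by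
        have hcont : Continuous (fun k : ℝ => 4 * (1 - k)) := by continuity
        have h2 := hcont.tendsto (1:ℝ)
        norm_num at h2
        exact h2
      exact hc.mono_left nhdsWithin_le_nhds
    · filter_upwards [self_mem_nhdsWithin] with k hk
      have : k < 1 := hk
      simp only [Set.mem_Ioi]
      linarith
  apply Filter.tendsto_atTop_mono' _ _ h1
  filter_upwards [Ioo_mem_nhdsLT_of_mem (by norm_num : (1:ℝ) ∈ Set.Ioc (15/16) 1)] with k hk
  exact psi_lower hk
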